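/- Let X be a T₀ space and G, H, K, M ⊆ X. Then: (i) G ≪_{I₂} H iff G ≪_{I₂} {h} for all h ∈ H; (ii) G ≪_{I₂} H iff ↑G ≪_{I₂} ↑H; (iii) G ≪_{I₂} H implies ↑H ⊆ ↑G; (iv) if ↑H ⊆ ↑G, H ≪_{I₂} K, and ↑M ⊆ ↑K, then G ≪_{I₂} M. -/

import Mathlib

open Set

/-- Specialization order: `x ≤ y` iff `x ∈ cl {y}`. -/
def specLE {X : Type} [TopologicalSpace X] (x y : X) : Prop := x ∈ closure {y}

/-- Upward closure w.r.t. the specialization order. -/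
def upClosure {X : Type} [TopologicalSpace X] (A : Set X) : Set X :=
  {y | ∃ a ∈ A, specLE a y}

/-- The underlying set of the Smyth power space: nonempty compact saturated subsets. -/
def SmythPS (X : Type) [TopologicalSpace X] : Type :=
  {K : Set X // K.Nonempty ∧ IsCompact K ∧ ∀ x ∈ K, ∀ y, specLE x y → y ∈ K}

/-- `□U = {K ∈ Q(X) : K ⊆ U}`. -/
def boxU {X : Type} [TopologicalSpace X] (U : Set X) : Set (SmythPS X) :=
  {K : SmythPS X | K.1 ⊆ U}

/-- The upper Vietoris topology on the Smyth power space. -/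
instance smythTop (X : Type) [TopologicalSpace X] : TopologicalSpace (SmythPS X) :=
  TopologicalSpace.generateFrom {S : Set (SmythPS X) | ∃ U : Set X, IsOpen U ∧ S = boxU U}

/-- The cut `A^δ = (A^↑)^↓` w.r.t. the specialization order. -/
def cutD {X : Type} [TopologicalSpace X] (A : Set X) : Set X :=
  {x | ∀ u : X, (∀ a ∈ A, specLE a u) → specLE x u}

/-- `U` is SI₂-open. -/
def SI2Open {X : Type} [TopologicalSpace X] (U : Set X) : Prop :=
  IsOpen U ∧ ∀ F : Set X, IsIrreducible F → (cutD F ∩ U).Nonempty → (F ∩ U).Nonempty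

/-- `le` makes `I` the index of a net: nonempty, reflexive, transitive, directed. -/
def IsNetOrder {I : Type} (le : I → I → Prop) : Prop :=
  Nonempty I ∧ (∀ i, le i i) ∧ (∀ i j k, le i j → le j k → le i k) ∧
    (∀ i j, ∃ k, le i k ∧ le j k)

/-- GSI₂-convergence of the net `xi` (indexed by `(I, le)`) to `x`. -/
def GSI2Conv {X : Type} [TopologicalSpace X] {I : Type} (le : I → I → Prop)
    (xi : I → X) (x : X) : Prop :=
  ∃ 𝒢 : Set (Set X), (∀ G ∈ 𝒢, G.Finite ∧ G.Nonempty) ∧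
    IsIrreducible {K : SmythPS X | ∃ G ∈ 𝒢, K.1 = upClosure G} ∧
    (∀ U : Set X, IsOpen U → (∃ G ∈ 𝒢, upClosure G ⊆ U) →
      ∃ i₀, ∀ i, le i₀ i → xi i ∈ U) ∧
    (⋂ G ∈ 𝒢, upClosure G) ⊆ upClosure {x}

/-- `A ≪_{I₂} B`. -/
def WayBelowI2 {X : Type} [TopologicalSpace X] (A B : Set X) : Prop :=
  ∀ D : Set X, IsIrreducible D → (cutD D ∩ B).Nonempty → (A ∩ closure D).Nonempty

/-- `w(x) = {↑F : F nonempty finite, F ≪_{I₂} x}` as a subset of the Smyth power space. -/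
def wPS {X : Type} [TopologicalSpace X] (x : X) : Set (SmythPS X) :=
  {K : SmythPS X | ∃ F : Set X, F.Finite ∧ F.Nonempty ∧ WayBelowI2 F {x} ∧ K.1 = upClosure F}

/-- QI₂-continuity. -/
def QI2Continuous (X : Type) [TopologicalSpace X] : Prop :=
  ∀ x : X, IsIrreducible (wPS x) ∧ upClosure {x} = ⋂ K ∈ wPS x, (K.1 : Set X)

/-- Strong QI₂-continuity. -/
def StronglyQI2Continuous (X : Type) [TopologicalSpace X] : Prop :=
  QI2Continuous X ∧
  ∀ (F : Set X) (x : X) (U : Set X), F.Finite → F.Nonempty → WayBelowI2 F {x} →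
    IsOpen U → F ⊆ U → ∃ W : Set X, SI2Open W ∧ x ∈ W ∧ W ⊆ U

lemma specLE_refl {X : Type} [TopologicalSpace X] (x : X) : specLE x x :=
  subset_closure rfl

lemma specLE_trans {X : Type} [TopologicalSpace X] {a b c : X}
    (h1 : specLE a b) (h2 : specLE b c) : specLE a c := by
  have : closure {b} ⊆ closure ({c} : Set X) :=
    closure_minimal (singleton_subset_iff.mpr h2) isClosed_closure
  exact this h1

lemma cutD_lower {X : Type} [TopologicalSpace X] {D : Set X} {x y : X}
    (hx : x ∈ cutD D) (hy : specLE y x) : y ∈ cutD D :=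
  fun u hu => specLE_trans hy (hx u hu)

lemma closure_lower {X : Type} [TopologicalSpace X] {D : Set X} {x y : X}
    (hx : x ∈ closure D) (hy : specLE y x) : y ∈ closure D := by
  have : closure {x} ⊆ closure D :=
    closure_minimal (singleton_subset_iff.mpr hx) isClosed_closure
  exact this hy

theorem stmt17 {X : Type} [TopologicalSpace X] [T0Space X] (G H K M : Set X) :
    (WayBelowI2 G H ↔ ∀ h ∈ H, WayBelowI2 G {h}) ∧
    (WayBelowI2 G H ↔ WayBelowI2 (upClosure G) (upClosure H)) ∧
    (WayBelowI2 G H → upClosure H ⊆ upClosure G) ∧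
    (upClosure H ⊆ upClosure G → WayBelowI2 H K → upClosure M ⊆ upClosure K →
      WayBelowI2 G M) := by
  refine ⟨?_, ?_, ?_, ?_⟩
  · constructor
    · intro hGH h hh D hD ⟨x, hx, hx2⟩
      exact hGH D hD ⟨x, hx, by simpa using hx2 ▸ hh⟩
    · intro hall D hD ⟨x, hx, hxH⟩
      exact hall x hxH D hD ⟨x, hx, rfl⟩
  · constructor
    · intro hGH D hD ⟨x, hx, ⟨h, hh, hhx⟩⟩
      obtain ⟨g, hg, hgD⟩ := hGH D hD ⟨h, cutD_lower hx hhx, hh⟩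
      exact ⟨g, ⟨g, hg, specLE_refl g⟩, hgD⟩
    · intro hGH D hD ⟨x, hx, hxH⟩
      obtain ⟨y, ⟨g, hg, hgy⟩, hyD⟩ := hGH D hD ⟨x, hx, ⟨x, hxH, specLE_refl x⟩⟩
      exact ⟨g, hg, closure_lower hyD hgy⟩
  · intro hGH y ⟨h, hh, hhy⟩
    have hirr : IsIrreducible ({h} : Set X) := isIrreducible_singleton
    obtain ⟨g, hg, hgh⟩ := hGH {h} hirr ⟨h, fun u hu => hu h rfl, hh⟩
    exact ⟨g, hg, specLE_trans (by exact hgh) hhy⟩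
  · intro hHG hHK hMK D hD ⟨m, hm, hmM⟩
    obtain ⟨k, hk, hkm⟩ := hMK ⟨m, hmM, specLE_refl m⟩
    obtain ⟨h, hh, hhD⟩ := hHK D hD ⟨k, cutD_lower hm hkm, hk⟩
    obtain ⟨g, hg, hgh⟩ := hHG ⟨h, hh, specLE_refl h⟩
    exact ⟨g, hg, closure_lower hhD hgh⟩
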